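/- For every measurable function f on ℝⁿ, every cube Q, and every λ ∈ (0,1), the oscillation-type quantity ω̃_λ(f;Q) = inf{ ω(f;E) : E ⊆ Q measurable, |E| ≥ (1−λ)|Q| } satisfies ω̃_λ(f;Q) ≤ 2·ω_λ(f;Q), where ω_λ(f;Q) = inf_{c∈ℝ} ((f−c)χ_Q)^*(λ|Q|). -/

import Mathlib

open MeasureTheory Metric Set
open scoped ENNReal

/-- The non-increasing rearrangement `g^*(t) = inf{α > 0 : |{|g| > α}| ≤ t}`. -/
noncomputable def rearr {n : ℕ} (g : (Fin n → ℝ) → ℝ) (t : ℝ≥0∞) : ℝ :=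
  sInf {α : ℝ | 0 < α ∧ volume {x | α < |g x|} ≤ t}

/-- `ω(f;E) = ess sup_E f − ess inf_E f`. -/
noncomputable def osc {n : ℕ} (f : (Fin n → ℝ) → ℝ) (E : Set (Fin n → ℝ)) : ℝ :=
  essSup f (volume.restrict E) - essInf f (volume.restrict E)

/-- `ω_λ(f;Q) = inf_c ((f−c)χ_Q)^*(λ|Q|)`. -/
noncomputable def oscLam {n : ℕ} (f : (Fin n → ℝ) → ℝ) (Q : Set (Fin n → ℝ)) (l : ℝ) : ℝ :=
  ⨅ c : ℝ, rearr (Q.indicator fun x => f x - c) (ENNReal.ofReal l * volume Q)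

/-- `ω̃_λ(f;Q) = inf{ω(f;E) : E ⊆ Q measurable, |E| ≥ (1−λ)|Q|}`. -/
noncomputable def oscLamTilde {n : ℕ} (f : (Fin n → ℝ) → ℝ) (Q : Set (Fin n → ℝ)) (l : ℝ) : ℝ :=
  sInf {a : ℝ | ∃ E : Set (Fin n → ℝ), MeasurableSet E ∧ E ⊆ Q ∧
    ENNReal.ofReal (1 - l) * volume Q ≤ volume E ∧ a = osc f E}

/-- For every measurable `f`, cube `Q` and `λ ∈ (0,1)`: `ω̃_λ(f;Q) ≤ 2·ω_λ(f;Q)`. -/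
theorem stmt2 {n : ℕ} (f : (Fin n → ℝ) → ℝ) (hf : Measurable f)
    (c : Fin n → ℝ) (r : ℝ) (hr : 0 < r) (l : ℝ) (hl0 : 0 < l) (hl1 : l < 1) :
    oscLamTilde f (closedBall c r) l ≤ 2 * oscLam f (closedBall c r) l := by
  classical
  set Q : Set (Fin n → ℝ) := closedBall c r with hQdef
  have hQm : MeasurableSet Q := measurableSet_closedBall
  have hQfin : volume Q ≠ ∞ := (isCompact_closedBall c r).measure_lt_top.ne
  have hQpos : 0 < volume Q :=
    lt_of_lt_of_le (measure_ball_pos volume c hr) (measure_mono ball_subset_closedBall)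
  set t : ℝ≥0∞ := ENNReal.ofReal l * volume Q with ht
  have htpos : 0 < t := ENNReal.mul_pos (ENNReal.ofReal_pos.2 hl0).ne' hQpos.ne'
  set S : Set ℝ := {a : ℝ | ∃ E : Set (Fin n → ℝ), MeasurableSet E ∧ E ⊆ Q ∧
    ENNReal.ofReal (1 - l) * volume Q ≤ volume E ∧ a = osc f E} with hSdef
  have hrearr_nonneg : ∀ c' : ℝ, 0 ≤ rearr (Q.indicator fun x => f x - c') t :=
    fun c' => Real.sInf_nonneg fun α hα => hα.1.le
  have hoscLam_nonneg : 0 ≤ oscLam f Q l := le_ciInf hrearr_nonneg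
  have hTilde : oscLamTilde f Q l = sInf S := rfl
  rw [hTilde]
  by_cases hbdd : BddBelow S
  swap
  · rw [csInf_of_not_bddBelow hbdd, Real.sInf_empty]
    linarith
  have key : ∀ ε > (0 : ℝ), sInf S ≤ 2 * oscLam f Q l + ε := by
    intro ε hε
    -- choose a good center c'
    obtain ⟨c', hc'⟩ : ∃ c',
        rearr (Q.indicator fun x => f x - c') t < oscLam f Q l + ε / 4 :=
      exists_lt_of_ciInf_lt (by linarith : oscLam f Q l < oscLam f Q l + ε / 4)
    set g : (Fin n → ℝ) → ℝ := Q.indicator fun x => f x - c' with hg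
    have hgmeas : Measurable g := (hf.sub measurable_const).indicator hQm
    set T : Set ℝ := {α : ℝ | 0 < α ∧ volume {x | α < |g x|} ≤ t} with hTdef
    -- T is nonempty
    have hsubQ : ∀ β : ℝ, 0 < β → {x | β < |g x|} ⊆ Q := by
      intro β hβ x hx
      by_contra hxQ
      have h0 : g x = 0 := indicator_of_notMem hxQ _
      rw [mem_setOf_eq, h0, abs_zero] at hx
      linarith
    have hTne : T.Nonempty := by
      set A : ℕ → Set (Fin n → ℝ) := fun k => {x | ((k : ℝ) + 1) < |g x|} with hA
      have hAm : ∀ k, MeasurableSet (A k) :=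
        fun k => measurableSet_lt measurable_const hgmeas.abs
      have hAanti : Antitone A := by
        intro i j hij x hx
        simp only [hA, mem_setOf_eq] at hx ⊢
        have : (i : ℝ) ≤ j := Nat.cast_le.2 hij
        linarith
      have hAfin : ∃ k, volume (A k) ≠ ∞ := by
        refine ⟨0, ?_⟩
        exact ne_top_of_le_ne_top hQfin
          (measure_mono (hsubQ _ (by norm_num)))
      have hAint : ⋂ k, A k = (∅ : Set (Fin n → ℝ)) := by
        ext x
        simp only [mem_iInter, mem_empty_iff_false, iff_false, not_forall]
        obtain ⟨k, hk⟩ := exists_nat_gt (|g x|)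
        exact ⟨k, by simp only [hA, mem_setOf_eq, not_lt]; linarith⟩
      have htend : Filter.Tendsto (fun k => volume (A k)) Filter.atTop (nhds 0) := by
        have := tendsto_measure_iInter_atTop
          (μ := (volume : Measure (Fin n → ℝ)))
          (fun k => (hAm k).nullMeasurableSet) hAanti hAfin
        rwa [hAint, measure_empty] at this
      obtain ⟨k, hk⟩ := (htend.eventually_lt_const htpos).exists
      exact ⟨(k : ℝ) + 1, by positivity, hk.le⟩
    -- choose α close to the infimum
    obtain ⟨α, hαT, hαlt⟩ : ∃ α ∈ T, α < rearr g t + ε / 4 := by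
      refine exists_lt_of_csInf_lt hTne ?_
      have : rearr g t = sInf T := rfl
      linarith
    have hαpos : 0 < α := hαT.1
    -- construct the good set E
    set E : Set (Fin n → ℝ) := Q ∩ {x | |f x - c'| ≤ α} with hE
    have hEm : MeasurableSet E :=
      hQm.inter (measurableSet_le (hf.sub measurable_const).abs measurable_const)
    have hEQ : E ⊆ Q := inter_subset_left
    have hdiff : Q \ E ⊆ {x | α < |g x|} := by
      intro x hx
      obtain ⟨hxQ, hxE⟩ := hx
      have hxa : ¬|f x - c'| ≤ α := fun h => hxE ⟨hxQ, h⟩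
      have hgx : g x = f x - c' := indicator_of_mem hxQ _
      simp only [mem_setOf_eq, hgx]
      linarith [not_le.mp hxa]
    have hdvol : volume (Q \ E) ≤ t := le_trans (measure_mono hdiff) hαT.2
    have hEvol : ENNReal.ofReal (1 - l) * volume Q ≤ volume E := by
      have hsplit : volume E + volume (Q \ E) = volume Q := by
        have := measure_inter_add_diff (μ := (volume : Measure (Fin n → ℝ))) Q hEm
        rwa [inter_eq_self_of_subset_right hEQ] at this
      have hone : ENNReal.ofReal (1 - l) * volume Q + ENNReal.ofReal l * volume Q
          = volume Q := by
        rw [← add_mul, ← ENNReal.ofReal_add (by linarith) hl0.le]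
        norm_num
      have hfin : ENNReal.ofReal l * volume Q ≠ ∞ :=
        ENNReal.mul_ne_top ENNReal.ofReal_ne_top hQfin
      rw [← ENNReal.add_le_add_iff_right hfin]
      calc ENNReal.ofReal (1 - l) * volume Q + ENNReal.ofReal l * volume Q
          = volume Q := hone
        _ = volume E + volume (Q \ E) := hsplit.symm
        _ ≤ volume E + ENNReal.ofReal l * volume Q := by
            exact add_le_add le_rfl (hdvol.trans_eq ht)
    have hEpos : volume E ≠ 0 := by
      have h1l : (0 : ℝ≥0∞) < ENNReal.ofReal (1 - l) * volume Q :=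
        ENNReal.mul_pos (ENNReal.ofReal_pos.2 (by linarith)).ne' hQpos.ne'
      exact (lt_of_lt_of_le h1l hEvol).ne'
    haveI hne : (ae (volume.restrict E)).NeBot := ae_restrict_neBot.2 hEpos
    -- bounds on E
    have hub : ∀ᵐ x ∂(volume.restrict E), f x ≤ c' + α := by
      rw [ae_restrict_iff' hEm]
      refine Filter.Eventually.of_forall fun x hx => ?_
      have := hx.2
      rw [mem_setOf_eq, abs_le] at this
      linarith [this.2]
    have hlb : ∀ᵐ x ∂(volume.restrict E), c' - α ≤ f x := by
      rw [ae_restrict_iff' hEm]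
      refine Filter.Eventually.of_forall fun x hx => ?_
      have := hx.2
      rw [mem_setOf_eq, abs_le] at this
      linarith [this.1]
    have hsup : essSup f (volume.restrict E) ≤ c' + α :=
      Filter.limsup_le_of_le (Filter.isCoboundedUnder_le_of_eventually_le _ hlb) hub
    have hinf : c' - α ≤ essInf f (volume.restrict E) :=
      Filter.le_liminf_of_le (Filter.isCoboundedUnder_ge_of_eventually_le _ hub) hlb
    have hosc : osc f E ≤ 2 * α := by
      rw [osc]; linarith
    have hmem : osc f E ∈ S := ⟨E, hEm, hEQ, hEvol, rfl⟩
    have h1 : sInf S ≤ osc f E := csInf_le hbdd hmem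
    linarith
  by_contra hcon
  push_neg at hcon
  have := key ((sInf S - 2 * oscLam f Q l) / 2) (by linarith)
  linarith
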